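/- Pointwise estimates on the localized profiles Q_b: there exist b* > 0 and constants C, C_k > 0 such that for all b with 0 < |b| < b* and all y ∈ ℝ: |Q_b(y)| ≤ C ( e^{−|y|} + |b| ( 1_{[−2,0]}(|b|^γ y) + e^{−|y|/2} ) ), and for every k ≥ 1, |Q_b^{(k)}(y)| ≤ C_k ( e^{−|y|} + |b| e^{−|y|/2} + |b|^{1+kγ} 1_{[−2,−1]}(|b|^γ y) ), where 1_A denotes the indicator function of the set A. -/

import Mathlib

open MeasureTheory Real Set Filter

/-- The ground state of the quintic gKdV equation: `Q x = (3 sech²(2x))^(1/4)`. -/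
noncomputable def Q (x : ℝ) : ℝ := (3 * (Real.cosh (2*x))⁻¹ ^ 2) ^ (1/4 : ℝ)

/-- The scaling generator applied to `Q`: `ΛQ(y) = Q(y)/2 + y Q'(y)`. -/
noncomputable def lamQ (y : ℝ) : ℝ := Q y / 2 + y * deriv Q y

/-- The space `𝒴` of smooth functions with exponential decay of all derivatives. -/
def MemY (φ : ℝ → ℝ) : Prop :=
  ContDiff ℝ (⊤ : ℕ∞) φ ∧
  ∀ k : ℕ, ∃ C > (0:ℝ), ∃ r > (0:ℝ),
    ∀ y : ℝ, |iteratedDeriv k φ y| ≤ C * (1 + |y|) ^ r * Real.exp (-|y|)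

/-- The defining properties of the profile `P`. -/
def IsP (P : ℝ → ℝ) : Prop :=
  ContDiff ℝ (⊤ : ℕ∞) P ∧ (∃ M : ℝ, ∀ y, |P y| ≤ M) ∧ MemY (deriv P) ∧
  (∀ y, deriv (fun z => -iteratedDeriv 2 P z + P z - 5 * Q z ^ 4 * P z) y = lamQ y) ∧
  Tendsto P atBot (nhds ((1/2) * ∫ x, Q x)) ∧
  Tendsto P atTop (nhds 0)

/-- `γ = 3/4`. -/
noncomputable def γc : ℝ := 3/4

noncomputable def gq (x : ℝ) : ℝ := Real.cosh (2*x) ^ (-(1/2) : ℝ)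
noncomputable def tq (x : ℝ) : ℝ := Real.sinh (2*x) / Real.cosh (2*x)

lemma gq_pos (x : ℝ) : 0 < gq x := Real.rpow_pos_of_pos (Real.cosh_pos _) _

lemma Q_eq (x : ℝ) : Q x = gq x * (3 ^ (1/4 : ℝ)) := by
  have hc : (0:ℝ) < Real.cosh (2*x) := Real.cosh_pos _
  rw [Q, gq, Real.mul_rpow (by norm_num) (sq_nonneg _), mul_comm]
  congr 1
  rw [← Real.rpow_natCast (Real.cosh (2*x))⁻¹ 2, ← Real.rpow_mul (by positivity),
    Real.inv_rpow hc.le, ← Real.rpow_neg hc.le]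
  norm_num

lemma abs_tq_le (x : ℝ) : |tq x| ≤ 1 := by
  have hc : (0:ℝ) < Real.cosh (2*x) := Real.cosh_pos _
  rw [tq, abs_div, abs_of_pos hc, div_le_one hc, Real.abs_sinh]
  calc Real.sinh |2*x| ≤ Real.cosh |2*x| := (Real.sinh_lt_cosh _).le
    _ = Real.cosh (2*x) := by rw [Real.cosh_abs]

lemma gq_le (x : ℝ) : gq x ≤ Real.sqrt 2 * Real.exp (-|x|) := by
  have hc : (0:ℝ) < Real.cosh (2*x) := Real.cosh_pos _
  have h1 : Real.exp (2*|x|) / 2 ≤ Real.cosh (2*x) := by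
    rw [Real.cosh_eq]
    rcases abs_cases x with ⟨h, _⟩ | ⟨h, _⟩ <;> rw [h] <;>
      [skip; rw [show 2 * -x = -(2*x) by ring]] <;>
      nlinarith [Real.exp_pos (2*x), Real.exp_pos (-(2*x))]
  have h2 : gq x = (Real.sqrt (Real.cosh (2*x)))⁻¹ := by
    rw [gq, Real.rpow_neg hc.le, Real.sqrt_eq_rpow]
  rw [h2]
  have h3 : Real.exp |x| / Real.sqrt 2 ≤ Real.sqrt (Real.cosh (2*x)) := by
    have := Real.sqrt_le_sqrt h1
    calc Real.exp |x| / Real.sqrt 2 = Real.sqrt (Real.exp (2*|x|) / 2) := by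
          rw [Real.sqrt_div (Real.exp_nonneg _), show (2:ℝ)*|x| = |x| + |x| by ring,
            Real.exp_add, ← sq, Real.sqrt_sq (Real.exp_nonneg _)]
      _ ≤ _ := this
  calc (Real.sqrt (Real.cosh (2*x)))⁻¹ ≤ (Real.exp |x| / Real.sqrt 2)⁻¹ := by
        apply inv_anti₀ (by positivity) h3
    _ = Real.sqrt 2 * Real.exp (-|x|) := by
        rw [Real.exp_neg]; field_simp

lemma hasDerivAt_cosh2 (x : ℝ) : HasDerivAt (fun z => Real.cosh (2*z)) (2 * Real.sinh (2*x)) x := by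
  simpa [Function.comp_def, mul_comm] using (Real.hasDerivAt_cosh (2*x)).comp x
    ((hasDerivAt_id x).const_mul 2)

lemma hasDerivAt_tq (x : ℝ) : HasDerivAt tq (2 - 2 * tq x ^ 2) x := by
  have hc : (0:ℝ) < Real.cosh (2*x) := Real.cosh_pos _
  have hs : HasDerivAt (fun z => Real.sinh (2*z)) (2 * Real.cosh (2*x)) x := by
    simpa [Function.comp_def, mul_comm] using (Real.hasDerivAt_sinh (2*x)).comp x
      ((hasDerivAt_id x).const_mul 2)
  have := hs.div (hasDerivAt_cosh2 x) hc.ne'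
  refine this.congr_deriv ?_
  have h1 := Real.cosh_sq_sub_sinh_sq (2*x)
  rw [tq]
  field_simp

lemma hasDerivAt_gq (x : ℝ) : HasDerivAt gq (-(tq x * gq x)) x := by
  have hc : (0:ℝ) < Real.cosh (2*x) := Real.cosh_pos _
  have h := (Real.hasDerivAt_rpow_const (p := (-(1/2):ℝ)) (Or.inl hc.ne')).comp x
    (hasDerivAt_cosh2 x)
  refine h.congr_deriv ?_
  rw [tq, gq]
  rw [show (-(1/2):ℝ) - 1 = -(3/2) by norm_num]
  rw [Real.rpow_neg hc.le, Real.rpow_neg hc.le]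
  rw [show (3/2:ℝ) = 1 + 1/2 by norm_num, Real.rpow_add hc, Real.rpow_one]
  field_simp

lemma iteratedDeriv_Q_structure (k : ℕ) :
    ∃ p : Polynomial ℝ, ∀ x, iteratedDeriv k Q x = gq x * p.eval (tq x) := by
  induction k with
  | zero =>
    exact ⟨Polynomial.C ((3:ℝ) ^ (1/4:ℝ)), fun x => by simp [Q_eq x]⟩
  | succ k ih =>
    obtain ⟨p, hp⟩ := ih
    refine ⟨-(Polynomial.X * p) + (Polynomial.C 2 - Polynomial.C 2 * Polynomial.X ^ 2) *
      p.derivative, fun x => ?_⟩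
    have hfun : iteratedDeriv k Q = fun x => gq x * p.eval (tq x) := funext hp
    have hd : HasDerivAt (fun x => gq x * p.eval (tq x))
        (gq x * ((-(Polynomial.X * p) + (Polynomial.C 2 - Polynomial.C 2 * Polynomial.X ^ 2) *
          p.derivative).eval (tq x))) x := by
      have h1 : HasDerivAt (fun z => p.eval (tq z))
          (p.derivative.eval (tq x) * (2 - 2 * tq x ^ 2)) x :=
        (p.hasDerivAt (tq x)).comp x (hasDerivAt_tq x)
      have := (hasDerivAt_gq x).mul h1
      refine this.congr_deriv ?_
      simp [Polynomial.eval_mul, Polynomial.eval_add]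
      ring
    rw [iteratedDeriv_succ, hfun, hd.deriv]

lemma Q_deriv_bound (k : ℕ) : ∃ C > (0:ℝ), ∀ x, |iteratedDeriv k Q x| ≤ C * Real.exp (-|x|) := by
  obtain ⟨p, hp⟩ := iteratedDeriv_Q_structure k
  obtain ⟨M, hM⟩ := (isCompact_Icc (a := (-1:ℝ)) (b := 1)).exists_bound_of_continuousOn
    (p.continuous.continuousOn)
  have hM0 : 0 ≤ M := le_trans (norm_nonneg _) (hM 0 (by norm_num))
  refine ⟨Real.sqrt 2 * M + 1, by positivity, fun x => ?_⟩
  rw [hp x, abs_mul, abs_of_pos (gq_pos x)]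
  have h1 : |p.eval (tq x)| ≤ M := by
    have := hM (tq x) (by rw [Set.mem_Icc]; exact abs_le.mp (abs_tq_le x))
    simpa using this
  calc gq x * |p.eval (tq x)| ≤ (Real.sqrt 2 * Real.exp (-|x|)) * M :=
        mul_le_mul (gq_le x) h1 (abs_nonneg _) (by positivity)
    _ ≤ (Real.sqrt 2 * M + 1) * Real.exp (-|x|) := by
        have := Real.exp_pos (-|x|); nlinarith

lemma Q_contDiff : ContDiff ℝ (⊤ : ℕ∞) Q := by
  rw [contDiff_iff_contDiffAt]
  intro x
  have hinner : ContDiff ℝ (⊤ : ℕ∞) (fun x : ℝ => 3 * (Real.cosh (2*x))⁻¹ ^ 2) := by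
    apply ContDiff.mul contDiff_const
    apply ContDiff.pow
    exact (Real.contDiff_cosh.comp (contDiff_const.mul contDiff_id)).inv
      (fun x => (Real.cosh_pos _).ne')
  have hpos : (0:ℝ) < 3 * (Real.cosh (2*x))⁻¹ ^ 2 := by positivity
  exact (Real.contDiffAt_rpow_const_of_ne hpos.ne').comp x hinner.contDiffAt

lemma polyexp (r : ℝ) (hr : 0 < r) : ∃ C > (0:ℝ), ∀ y : ℝ,
    (1 + |y|) ^ r * Real.exp (-|y|) ≤ C * Real.exp (-|y|/2) := by
  set n : ℕ := ⌈r⌉₊ with hn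
  have hn1 : 1 ≤ n := Nat.one_le_iff_ne_zero.2 (by
    simp [hn, Nat.ceil_eq_zero, not_le, hr])
  refine ⟨(2*n)^n, by positivity, fun y => ?_⟩
  set x := |y| with hx
  have hx0 : 0 ≤ x := abs_nonneg y
  have h1 : (1 + x) ^ r ≤ (1 + x) ^ (n:ℝ) :=
    Real.rpow_le_rpow_of_exponent_le (by linarith) (Nat.le_ceil r)
  have h2 : (1 + x) ≤ (2*n) * Real.exp (x / (2*n)) := by
    have hne : (0:ℝ) < 2*n := by positivity
    have := Real.add_one_le_exp (x / (2*n))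
    calc (1:ℝ) + x ≤ 2*n + x := by
          have : (1:ℝ) ≤ 2*n := by
            have : (1:ℝ) ≤ n := by exact_mod_cast hn1
            linarith
          linarith
      _ = (2*n) * (x/(2*n) + 1) := by field_simp; ring
      _ ≤ (2*n) * Real.exp (x/(2*n)) := by
          apply mul_le_mul_of_nonneg_left this hne.le
  have h3 : (1 + x) ^ n ≤ (2*n)^n * Real.exp (x/2) := by
    calc (1+x)^n ≤ ((2*n) * Real.exp (x/(2*n)))^n :=
          pow_le_pow_left₀ (by linarith) h2 n
      _ = (2*n)^n * Real.exp (x/(2*n))^n := mul_pow _ _ n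
      _ = (2*n)^n * Real.exp (x/2) := by
          rw [← Real.exp_nat_mul]
          congr 1
          have hne : (n:ℝ) ≠ 0 := by positivity
          field_simp
  have h4 : (1 + x) ^ r ≤ (2*n)^n * Real.exp (x/2) := by
    rw [show ((1:ℝ)+x) ^ (n:ℝ) = (1+x)^n from Real.rpow_natCast _ n] at h1
    linarith
  calc (1+x)^r * Real.exp (-x) ≤ ((2*n)^n * Real.exp (x/2)) * Real.exp (-x) :=
        mul_le_mul_of_nonneg_right h4 (Real.exp_pos _).le
    _ = (2*n)^n * Real.exp (-x/2) := by
        rw [mul_assoc, ← Real.exp_add]; ring_nf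

-- bound for iteratedDeriv k P, k ≥ 1, from MemY (deriv P)
lemma Pk_bound (P : ℝ → ℝ)
    (hY : ∀ k : ℕ, ∃ C > (0:ℝ), ∃ r > (0:ℝ),
      ∀ y : ℝ, |iteratedDeriv k (deriv P) y| ≤ C * (1 + |y|) ^ r * Real.exp (-|y|))
    (k : ℕ) (hk : 1 ≤ k) :
    ∃ D > (0:ℝ), ∀ y, |iteratedDeriv k P y| ≤ D * Real.exp (-|y|/2) := by
  obtain ⟨m, rfl⟩ := Nat.exists_eq_add_of_le hk
  obtain ⟨C, hC, r, hrpos, hb⟩ := hY m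
  obtain ⟨Cr, hCr, hcr⟩ := polyexp r hrpos
  refine ⟨C * Cr, by positivity, fun y => ?_⟩
  have : iteratedDeriv (1 + m) P y = iteratedDeriv m (deriv P) y := by
    rw [add_comm, iteratedDeriv_succ']
  rw [this]
  calc |iteratedDeriv m (deriv P) y| ≤ C * (1 + |y|) ^ r * Real.exp (-|y|) := hb y
    _ = C * ((1 + |y|) ^ r * Real.exp (-|y|)) := by ring
    _ ≤ C * (Cr * Real.exp (-|y|/2)) := by
        exact mul_le_mul_of_nonneg_left (hcr y) hC.le
    _ = C * Cr * Real.exp (-|y|/2) := by ring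

lemma P0_bound (P : ℝ → ℝ) (hsm : ContDiff ℝ (⊤ : ℕ∞) P)
    (hY : ∀ k : ℕ, ∃ C > (0:ℝ), ∃ r > (0:ℝ),
      ∀ y : ℝ, |iteratedDeriv k (deriv P) y| ≤ C * (1 + |y|) ^ r * Real.exp (-|y|))
    (hder : ContDiff ℝ (⊤ : ℕ∞) (deriv P))
    (htop : Tendsto P atTop (nhds 0)) :
    ∃ D > (0:ℝ), ∀ y, 0 ≤ y → |P y| ≤ D * Real.exp (-|y|/2) := by
  obtain ⟨C, hC, r, hrpos, hb⟩ := hY 0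
  obtain ⟨Cr, hCr, hcr⟩ := polyexp r hrpos
  have hbd : ∀ x : ℝ, |deriv P x| ≤ C * Cr * Real.exp (-|x|/2) := by
    intro x
    calc |deriv P x| = |iteratedDeriv 0 (deriv P) x| := by rw [iteratedDeriv_zero]
      _ ≤ C * (1 + |x|) ^ r * Real.exp (-|x|) := hb x
      _ = C * ((1 + |x|) ^ r * Real.exp (-|x|)) := by ring
      _ ≤ C * (Cr * Real.exp (-|x|/2)) := mul_le_mul_of_nonneg_left (hcr x) hC.le
      _ = C * Cr * Real.exp (-|x|/2) := by ring
  refine ⟨2 * (C * Cr), by positivity, fun y hy => ?_⟩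
  -- integrability of the dominating exponential on Ioi y
  have hexp_int : IntegrableOn (fun x => Real.exp (-x/2)) (Ioi y) := by
    have := exp_neg_integrableOn_Ioi y (b := (1/2:ℝ)) (by norm_num)
    refine this.congr_fun (fun x _ => by ring_nf) measurableSet_Ioi
  have hPd_int : IntegrableOn (deriv P) (Ioi y) := by
    apply Integrable.mono' (hexp_int.const_mul (C * Cr))
    · exact (hder.continuous.aestronglyMeasurable).restrict
    · filter_upwards [ae_restrict_mem measurableSet_Ioi] with x hx
      have hx0 : 0 ≤ x := le_trans hy (le_of_lt hx)
      simpa [Real.norm_eq_abs, abs_of_nonneg hx0] using hbd x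
  have hderiv : ∀ x ∈ Ioi y, HasDerivAt P (deriv P x) x :=
    fun x _ => (hsm.differentiable (by simp) x).hasDerivAt
  have key : ∫ x in Ioi y, deriv P x = 0 - P y :=
    integral_Ioi_of_hasDerivAt_of_tendsto
      (hsm.continuous.continuousWithinAt) hderiv hPd_int htop
  -- value of the dominating integral
  have hval : ∫ x in Ioi y, Real.exp (-x/2) = 2 * Real.exp (-y/2) := by
    have hF : ∀ x ∈ Ioi y, HasDerivAt (fun t => -2 * Real.exp (-t/2)) (Real.exp (-x/2)) x := by
      intro x _
      have h2 := (((hasDerivAt_id x).neg.div_const 2).exp.const_mul (-2:ℝ))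
      refine h2.congr_deriv ?_
      simp only [Pi.neg_apply, id_eq]
      ring_nf
    have hT : Tendsto (fun t : ℝ => -2 * Real.exp (-t/2)) atTop (nhds 0) := by
      have : Tendsto (fun t : ℝ => -t/2) atTop atBot := by
        apply Tendsto.atBot_div_const (by norm_num)
        exact tendsto_neg_atBot_iff.mpr tendsto_id
      have := (Real.tendsto_exp_atBot).comp this
      simpa using this.const_mul (-2:ℝ)
    have := integral_Ioi_of_hasDerivAt_of_tendsto
      (Continuous.continuousWithinAt (by continuity)) hF hexp_int hT
    rw [this]; ring
  have habs : |∫ x in Ioi y, deriv P x| ≤ ∫ x in Ioi y, C * Cr * Real.exp (-x/2) := by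
    calc |∫ x in Ioi y, deriv P x| ≤ ∫ x in Ioi y, |deriv P x| := by
          simpa [Real.norm_eq_abs] using norm_integral_le_integral_norm (μ := volume.restrict (Ioi y)) (deriv P)
      _ ≤ ∫ x in Ioi y, C * Cr * Real.exp (-x/2) := by
          apply integral_mono_ae hPd_int.abs (hexp_int.const_mul _)
          filter_upwards [ae_restrict_mem measurableSet_Ioi] with x hx
          have hx0 : 0 ≤ x := le_trans hy (le_of_lt hx)
          have := hbd x
          rwa [abs_of_nonneg hx0] at this
  rw [key] at habs
  rw [zero_sub, abs_neg] at habs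
  have : ∫ x in Ioi y, C * Cr * Real.exp (-x/2) = C * Cr * (2 * Real.exp (-y/2)) := by
    rw [MeasureTheory.integral_const_mul, hval]
  rw [this] at habs
  rw [abs_of_nonneg hy]
  linarith

lemma iteratedDeriv_const_fun (n : ℕ) (c : ℝ) (hn : 1 ≤ n) :
    iteratedDeriv n (fun _ : ℝ => c) = fun _ => (0:ℝ) := by
  obtain ⟨m, rfl⟩ := Nat.exists_eq_add_of_le hn
  induction m with
  | zero => funext x; simp [iteratedDeriv_one]
  | succ m ih =>
    rw [show 1 + (m+1) = (1 + m) + 1 by ring, iteratedDeriv_succ, ih (by omega)]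
    funext x; simp

lemma chi_deriv_zero (χ : ℝ → ℝ)
    (hχleft : ∀ y ≤ (-2:ℝ), χ y = 0) (hχright : ∀ y ≥ (-1:ℝ), χ y = 1)
    (j : ℕ) (hj : 1 ≤ j) (s : ℝ) (hs : s ∉ Icc (-2:ℝ) (-1)) :
    iteratedDeriv j χ s = 0 := by
  -- the set where the iterated derivative vanishes is closed and contains the complement
  have hopen : ∀ t : ℝ, t < -2 ∨ -1 < t → iteratedDeriv j χ t = 0 := by
    intro t ht
    rcases ht with ht | ht
    · have hev : χ =ᶠ[nhds t] (fun _ => (0:ℝ)) := by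
        filter_upwards [Iio_mem_nhds ht] with z hz
        exact hχleft z (le_of_lt hz)
      rw [hev.iteratedDeriv_eq j, iteratedDeriv_const_fun j 0 hj]
    · have hev : χ =ᶠ[nhds t] (fun _ => (1:ℝ)) := by
        filter_upwards [Ioi_mem_nhds ht] with z hz
        exact hχright z (le_of_lt hz)
      rw [hev.iteratedDeriv_eq j, iteratedDeriv_const_fun j 1 hj]
  rw [Set.mem_Icc, not_and_or, not_le, not_le] at hs
  rcases hs with hs | hs
  · exact hopen s (Or.inl hs)
  · exact hopen s (Or.inr hs)

lemma chi_deriv_bounded (χ : ℝ → ℝ) (hχ : ContDiff ℝ (⊤ : ℕ∞) χ)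
    (hχ01 : ∀ y, 0 ≤ χ y ∧ χ y ≤ 1)
    (hχleft : ∀ y ≤ (-2:ℝ), χ y = 0) (hχright : ∀ y ≥ (-1:ℝ), χ y = 1)
    (j : ℕ) : ∃ K > (0:ℝ), ∀ s, |iteratedDeriv j χ s| ≤ K := by
  rcases Nat.eq_zero_or_pos j with rfl | hj
  · exact ⟨1, one_pos, fun s => by
      rw [iteratedDeriv_zero, abs_le]; exact ⟨by linarith [(hχ01 s).1], (hχ01 s).2⟩⟩
  obtain ⟨K, hK⟩ := (isCompact_Icc (a := (-2:ℝ)) (b := -1)).exists_bound_of_continuousOn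
    ((hχ.continuous_iteratedDeriv j (by exact_mod_cast le_top)).continuousOn)
  refine ⟨K + 1, by have := le_trans (norm_nonneg _) (hK (-2) (by norm_num)); linarith,
    fun s => ?_⟩
  by_cases hs : s ∈ Icc (-2:ℝ) (-1)
  · have := hK s hs; rw [Real.norm_eq_abs] at this; linarith
  · rw [chi_deriv_zero χ hχleft hχright j hj s hs]
    have := le_trans (norm_nonneg (iteratedDeriv j χ (-2))) (hK (-2) (by norm_num))
    simp; linarith

lemma iteratedDeriv_add' (k : ℕ) (f g : ℝ → ℝ) (hf : ContDiff ℝ (⊤:ℕ∞) f)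
    (hg : ContDiff ℝ (⊤:ℕ∞) g) (y : ℝ) :
    iteratedDeriv k (f + g) y = iteratedDeriv k f y + iteratedDeriv k g y := by
  simp only [← iteratedDerivWithin_univ]
  exact iteratedDerivWithin_add (mem_univ y) uniqueDiffOn_univ
    ((hf.of_le (by exact_mod_cast le_top)).contDiffWithinAt) ((hg.of_le (by exact_mod_cast le_top)).contDiffWithinAt)

lemma iteratedDeriv_cmul' (k : ℕ) (c : ℝ) (g : ℝ → ℝ) (hg : ContDiff ℝ (⊤:ℕ∞) g) (y : ℝ) :
    iteratedDeriv k (fun z => c * g z) y = c * iteratedDeriv k g y := by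
  simp only [← iteratedDerivWithin_univ]
  exact iteratedDerivWithin_const_mul (mem_univ y) uniqueDiffOn_univ c
    ((hg.of_le (by exact_mod_cast le_top)).contDiffWithinAt)


set_option maxHeartbeats 2000000 in
/-- Pointwise estimates on the localized profile `Q_b(y) = Q(y) + b χ(|b|^γ y) P(y)`
and on its derivatives, for `|b|` small. -/
theorem Qb_pointwise_estimates
    (P : ℝ → ℝ) (hP : IsP P)
    (χ : ℝ → ℝ) (hχ : ContDiff ℝ (⊤ : ℕ∞) χ)
    (hχ01 : ∀ y, 0 ≤ χ y ∧ χ y ≤ 1)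
    (hχleft : ∀ y ≤ (-2:ℝ), χ y = 0)
    (hχright : ∀ y ≥ (-1:ℝ), χ y = 1)
    (hχ'' : ∃ K > (0:ℝ), ∀ y, (iteratedDeriv 2 χ y) ^ 2 ≤ K * deriv χ y) :
    ∃ bstar > (0:ℝ), ∃ C > (0:ℝ), ∃ Ck : ℕ → ℝ, (∀ k, 0 < Ck k) ∧
      ∀ b : ℝ, 0 < |b| → |b| < bstar →
        (∀ y : ℝ,
          |Q y + b * (χ (|b| ^ γc * y) * P y)| ≤
            C * (Real.exp (-|y|)
              + |b| * (Set.indicator (Icc (-2:ℝ) 0) (fun _ => (1:ℝ)) (|b| ^ γc * y)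
                  + Real.exp (-|y| / 2)))) ∧
        (∀ k : ℕ, 1 ≤ k → ∀ y : ℝ,
          |iteratedDeriv k (fun z => Q z + b * (χ (|b| ^ γc * z) * P z)) y| ≤
            Ck k * (Real.exp (-|y|) + |b| * Real.exp (-|y| / 2)
              + |b| ^ (1 + (k:ℝ) * γc)
                  * Set.indicator (Icc (-2:ℝ) (-1)) (fun _ => (1:ℝ)) (|b| ^ γc * y))) := by
  obtain ⟨hPsm, ⟨M, hM⟩, hPd, _, _, hPtop⟩ := hP
  obtain ⟨hPdsm, hPdY⟩ := hPd
  have hM0 : 0 ≤ M := le_trans (abs_nonneg _) (hM 0)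
  obtain ⟨D0, hD0, hP0⟩ := P0_bound P hPsm hPdY hPdsm hPtop
  choose K hKpos hK using chi_deriv_bounded χ hχ hχ01 hχleft hχright
  choose CQ hCQpos hCQ using Q_deriv_bound
  have hDk : ∀ k : ℕ, ∃ D > (0:ℝ), ∀ y, 1 ≤ k → |iteratedDeriv k P y| ≤ D * Real.exp (-|y|/2) := by
    intro k
    rcases Nat.eq_zero_or_pos k with rfl | hk
    · exact ⟨1, one_pos, fun y h => absurd h (by omega)⟩
    · obtain ⟨D, hD, h⟩ := Pk_bound P hPdY k hk
      exact ⟨D, hD, fun y _ => h y⟩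
  choose D hDpos hD using hDk
  set S : ℕ → ℝ := fun k => ∑ i ∈ Finset.range (k+1),
    (k.choose i : ℝ) * K i * (D (k-i) + M) with hSdef
  have hS0 : ∀ k, 0 ≤ S k := by
    intro k
    apply Finset.sum_nonneg
    intro i _
    have := hKpos i
    have := hDpos (k - i)
    positivity
  have hγpos : (0:ℝ) < γc := by norm_num [γc]
  refine ⟨1, one_pos, CQ 0 + M + D0, by have := hCQpos 0; positivity,
    fun k => CQ k + S k + 1, fun k => by have := hCQpos k; have := hS0 k; positivity,
    fun b hb0 hb1 => ?_⟩
  set a : ℝ := |b| ^ γc with hadef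
  have ha0 : 0 < a := Real.rpow_pos_of_pos hb0 _
  have ha1 : a ≤ 1 := Real.rpow_le_one (abs_nonneg b) hb1.le hγpos.le
  constructor
  · -- zeroth order estimate
    intro y
    set I : ℝ := Set.indicator (Icc (-2:ℝ) 0) (fun _ => (1:ℝ)) (a * y) with hIdef
    have hI : 0 ≤ I := Set.indicator_nonneg (fun _ _ => zero_le_one) _
    have hE' : (0:ℝ) < Real.exp (-|y|/2) := Real.exp_pos _
    have hw : |χ (a*y) * P y| ≤ M * I + D0 * Real.exp (-|y|/2) := by
      by_cases hmem : a*y ∈ Icc (-2:ℝ) 0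
      · have hI1 : I = 1 := Set.indicator_of_mem hmem _
        rw [hI1, abs_mul]
        have h1 : |χ (a*y)| ≤ 1 := abs_le.2 ⟨by linarith [(hχ01 (a*y)).1], (hχ01 (a*y)).2⟩
        have := mul_le_mul h1 (hM y) (abs_nonneg _) zero_le_one
        nlinarith [mul_pos hD0 hE']
      · have hI0 : I = 0 := Set.indicator_of_notMem hmem _
        rw [hI0]
        rw [Set.mem_Icc, not_and_or, not_le, not_le] at hmem
        rcases hmem with hlt | hgt
        · rw [hχleft (a*y) hlt.le]
          simp
          positivity
        · have hy0 : 0 < y := by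
            by_contra h
            push_neg at h
            nlinarith [mul_nonneg ha0.le (neg_nonneg.2 h)]
          have h1 : |χ (a*y)| ≤ 1 := abs_le.2 ⟨by linarith [(hχ01 (a*y)).1], (hχ01 (a*y)).2⟩
          have h2 : |P y| ≤ D0 * Real.exp (-|y|/2) := hP0 y hy0.le
          rw [abs_mul]
          calc |χ (a*y)| * |P y| ≤ 1 * (D0 * Real.exp (-|y|/2)) :=
                mul_le_mul h1 h2 (abs_nonneg _) zero_le_one
            _ ≤ M * 0 + D0 * Real.exp (-|y|/2) := by nlinarith
    calc |Q y + b * (χ (a * y) * P y)| ≤ |Q y| + |b| * |χ (a*y) * P y| := by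
          rw [← abs_mul]; exact abs_add_le _ _
      _ ≤ CQ 0 * Real.exp (-|y|) + |b| * (M * I + D0 * Real.exp (-|y|/2)) := by
          have h1 : |Q y| = |iteratedDeriv 0 Q y| := by rw [iteratedDeriv_zero]
          have := hCQ 0 y
          rw [h1]
          exact add_le_add this (mul_le_mul_of_nonneg_left hw (abs_nonneg b))
      _ ≤ (CQ 0 + M + D0) * (Real.exp (-|y|) + |b| * (I + Real.exp (-|y|/2))) := by
          have hCQ0 := hCQpos 0
          have hE : (0:ℝ) < Real.exp (-|y|) := Real.exp_pos _
          nlinarith [mul_nonneg (abs_nonneg b) hI, mul_nonneg (abs_nonneg b) hE'.le,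
            mul_nonneg (mul_nonneg (abs_nonneg b) hI) (le_of_lt hE')]
  · -- higher order estimates
    intro k hk y
    set I : ℝ := Set.indicator (Icc (-2:ℝ) (-1)) (fun _ => (1:ℝ)) (a * y) with hIdef
    have hI : 0 ≤ I := Set.indicator_nonneg (fun _ _ => zero_le_one) _
    have hE : (0:ℝ) < Real.exp (-|y|) := Real.exp_pos _
    have hE' : (0:ℝ) < Real.exp (-|y|/2) := Real.exp_pos _
    have hχa : ContDiff ℝ (⊤:ℕ∞) (fun z => χ (a * z)) :=
      hχ.comp (contDiff_const.mul contDiff_id)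
    have hG : ContDiff ℝ (⊤:ℕ∞) (fun z => χ (a * z) * P z) := hχa.mul hPsm
    have hsplit : iteratedDeriv k (fun z => Q z + b * (χ (a * z) * P z)) y
        = iteratedDeriv k Q y + b * iteratedDeriv k (fun z => χ (a * z) * P z) y := by
      have h1 : (fun z => Q z + b * (χ (a * z) * P z))
          = Q + (fun z => b * (χ (a * z) * P z)) := rfl
      rw [h1, iteratedDeriv_add' k Q _ Q_contDiff (contDiff_const.mul hG),
        iteratedDeriv_cmul' k b _ hG]
    have hlb : |iteratedDeriv k (fun z => χ (a * z) * P z) y| ≤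
        ∑ i ∈ Finset.range (k+1), (k.choose i : ℝ) *
          |iteratedDeriv i (fun z => χ (a * z)) y| * |iteratedDeriv (k-i) P y| := by
      rw [← Real.norm_eq_abs, ← norm_iteratedFDeriv_eq_norm_iteratedDeriv]
      have := norm_iteratedFDeriv_mul_le (𝕜 := ℝ) hχa hPsm y
        (n := k) (by exact_mod_cast le_top)
      simpa only [norm_iteratedFDeriv_eq_norm_iteratedDeriv, Real.norm_eq_abs] using this
    have hterm : ∀ i ∈ Finset.range (k+1),
        (k.choose i : ℝ) * |iteratedDeriv i (fun z => χ (a * z)) y| *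
          |iteratedDeriv (k-i) P y| ≤
        ((k.choose i : ℝ) * K i * (D (k-i) + M)) * (Real.exp (-|y|/2) + a^k * I) := by
      intro i hi
      have hik : i ≤ k := by
        rw [Finset.mem_range] at hi; omega
      have hrw : iteratedDeriv i (fun z => χ (a * z)) y = a^i * iteratedDeriv i χ (a*y) := by
        have := iteratedDeriv_comp_const_mul (n := i) (hχ.of_le (by exact_mod_cast le_top)) a
        exact congrFun this y
      have hchoose : (0:ℝ) ≤ (k.choose i : ℝ) := Nat.cast_nonneg _
      rcases eq_or_lt_of_le hik with rfl | hlt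
      · -- i = k
        rw [hrw, Nat.sub_self, iteratedDeriv_zero]
        by_cases hmem : a*y ∈ Icc (-2:ℝ) (-1)
        · have hI1 : I = 1 := Set.indicator_of_mem hmem _
          rw [hI1, abs_mul, abs_of_pos (pow_pos ha0 i)]
          simp only [Nat.choose_self, Nat.cast_one, one_mul]
          have h1 : |iteratedDeriv i χ (a*y)| ≤ K i := hK i (a*y)
          have h2 : |P y| ≤ M := hM y
          have hDi := (hDpos 0).le
          have hKi := (hKpos i).le
          have hai : (0:ℝ) ≤ a^i := (pow_pos ha0 i).le
          have h3 : a^i * |iteratedDeriv i χ (a*y)| * |P y| ≤ a^i * K i * M :=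
            mul_le_mul (mul_le_mul_of_nonneg_left h1 hai) h2 (abs_nonneg _)
              (mul_nonneg hai hKi)
          calc a^i * |iteratedDeriv i χ (a*y)| * |P y| ≤ a^i * K i * M := h3
            _ = (K i * M) * (a^i * 1) := by ring
            _ ≤ (K i * (D 0 + M)) * (a^i * 1) := by
                apply mul_le_mul_of_nonneg_right _ (by positivity)
                nlinarith
            _ ≤ K i * (D 0 + M) * (Real.exp (-|y|/2) + a^i * 1) := by
                nlinarith [mul_nonneg (mul_nonneg hKi (add_nonneg hDi hM0)) hE'.le]
        · have hz : iteratedDeriv i χ (a*y) = 0 :=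
            chi_deriv_zero χ hχleft hχright i hk (a*y) hmem
          rw [hz]
          simp only [mul_zero, abs_zero, zero_mul, mul_zero]
          have hKi := (hKpos i).le
          have hDi := (hDpos 0).le
          positivity
      · -- i < k
        have hk1 : 1 ≤ k - i := by omega
        have h1 : |iteratedDeriv i (fun z => χ (a * z)) y| ≤ K i := by
          rw [hrw, abs_mul, abs_of_pos (pow_pos ha0 i)]
          have := hK i (a*y)
          have hai : a^i ≤ 1 := pow_le_one₀ ha0.le ha1
          nlinarith [abs_nonneg (iteratedDeriv i χ (a*y)), (hKpos i).le, pow_pos ha0 i]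
        have h2 : |iteratedDeriv (k-i) P y| ≤ D (k-i) * Real.exp (-|y|/2) := hD (k-i) y hk1
        calc (k.choose i : ℝ) * |iteratedDeriv i (fun z => χ (a * z)) y| *
              |iteratedDeriv (k-i) P y|
            ≤ (k.choose i : ℝ) * K i * (D (k-i) * Real.exp (-|y|/2)) := by
              apply mul_le_mul
              · exact mul_le_mul_of_nonneg_left h1 hchoose
              · exact h2
              · exact abs_nonneg _
              · exact mul_nonneg hchoose (hKpos i).le
          _ = ((k.choose i : ℝ) * K i * D (k-i)) * Real.exp (-|y|/2) := by ring
          _ ≤ ((k.choose i : ℝ) * K i * (D (k-i) + M)) * Real.exp (-|y|/2) := by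
              apply mul_le_mul_of_nonneg_right _ hE'.le
              nlinarith [mul_nonneg hchoose (hKpos i).le]
          _ ≤ ((k.choose i : ℝ) * K i * (D (k-i) + M)) * (Real.exp (-|y|/2) + a^k * I) := by
              have hak : (0:ℝ) ≤ a^k := (pow_pos ha0 k).le
              nlinarith [mul_nonneg (mul_nonneg (mul_nonneg hchoose (hKpos i).le)
                (add_nonneg (hDpos (k-i)).le hM0)) (mul_nonneg hak hI)]
    have hsum : |iteratedDeriv k (fun z => χ (a * z) * P z) y| ≤
        S k * (Real.exp (-|y|/2) + a^k * I) := by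
      calc |iteratedDeriv k (fun z => χ (a * z) * P z) y| ≤ _ := hlb
        _ ≤ ∑ i ∈ Finset.range (k+1), ((k.choose i : ℝ) * K i * (D (k-i) + M)) *
            (Real.exp (-|y|/2) + a^k * I) := Finset.sum_le_sum hterm
        _ = S k * (Real.exp (-|y|/2) + a^k * I) := by rw [hSdef, ← Finset.sum_mul]
    have hba : |b| * a^k = |b| ^ (1 + (k:ℝ) * γc) := by
      rw [hadef, ← Real.rpow_natCast (|b| ^ γc) k, ← Real.rpow_mul (abs_nonneg b),
        Real.rpow_add hb0, Real.rpow_one, mul_comm γc (k:ℝ)]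
    have hQk := hCQ k y
    calc |iteratedDeriv k (fun z => Q z + b * (χ (a * z) * P z)) y|
        ≤ |iteratedDeriv k Q y| + |b| * |iteratedDeriv k (fun z => χ (a * z) * P z) y| := by
          rw [hsplit, ← abs_mul]; exact abs_add_le _ _
      _ ≤ CQ k * Real.exp (-|y|) + |b| * (S k * (Real.exp (-|y|/2) + a^k * I)) :=
          add_le_add hQk (mul_le_mul_of_nonneg_left hsum (abs_nonneg b))
      _ = CQ k * Real.exp (-|y|) + S k * (|b| * Real.exp (-|y|/2))
            + S k * ((|b| * a^k) * I) := by ring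
      _ = CQ k * Real.exp (-|y|) + S k * (|b| * Real.exp (-|y|/2))
            + S k * (|b| ^ (1 + (k:ℝ) * γc) * I) := by rw [hba]
      _ ≤ (CQ k + S k + 1) * Real.exp (-|y|) + (CQ k + S k + 1) * (|b| * Real.exp (-|y|/2))
            + (CQ k + S k + 1) * (|b| ^ (1 + (k:ℝ) * γc) * I) := by
          have h1 := hCQpos k
          have h2 := hS0 k
          have hbE := mul_nonneg (abs_nonneg b) hE'.le
          have hbI := mul_nonneg (Real.rpow_nonneg (abs_nonneg b) (1 + (k:ℝ)*γc)) hI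
          nlinarith
      _ = (CQ k + S k + 1) * (Real.exp (-|y|) + |b| * Real.exp (-|y|/2)
            + |b| ^ (1 + (k:ℝ) * γc) * I) := by ring
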